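/- Let 0 ≤ ε < 1 and let Q ⊆ P be finite nonempty sets in ℝ². If Q is an ε-kernel of P, then every point p ∈ P satisfies dist(p, conv(Q)) ≤ ε·diam(P), where conv(Q) is the convex hull of Q and dist denotes Euclidean distance from a point to a set. -/

import Mathlib

open Real RealInnerProductSpace

/-- The directional width of a finite nonempty point set `P` in direction `u`:
`max_{p ∈ P} ⟪u, p⟫ - min_{p ∈ P} ⟪u, p⟫`. -/
noncomputable def dirWidth (P : Finset (EuclideanSpace ℝ (Fin 2))) (hP : P.Nonempty)
    (u : EuclideanSpace ℝ (Fin 2)) : ℝ :=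
  P.sup' hP (fun p => ⟪u, p⟫) - P.inf' hP (fun p => ⟪u, p⟫)

/-- The diameter of a finite nonempty point set: `max_{p, q ∈ P} ‖p - q‖`. -/
noncomputable def fdiam (P : Finset (EuclideanSpace ℝ (Fin 2))) (hP : P.Nonempty) : ℝ :=
  (P ×ˢ P).sup' (hP.product hP) (fun pq => dist pq.1 pq.2)

/-- `Q` is an `ε`-kernel of `P`: for every unit direction `u`,
`(1 - ε) * w(u, P) ≤ w(u, Q)`. -/
def IsKernel (ε : ℝ) (P Q : Finset (EuclideanSpace ℝ (Fin 2)))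
    (hP : P.Nonempty) (hQ : Q.Nonempty) : Prop :=
  ∀ u : EuclideanSpace ℝ (Fin 2), ‖u‖ = 1 → (1 - ε) * dirWidth P hP u ≤ dirWidth Q hQ u

set_option maxHeartbeats 2000000 in
theorem kernel_is_hull
    (ε : ℝ) (hε0 : 0 ≤ ε) (hε1 : ε < 1)
    (P Q : Finset (EuclideanSpace ℝ (Fin 2))) (hP : P.Nonempty) (hQ : Q.Nonempty)
    (hQP : Q ⊆ P) (hker : IsKernel ε P Q hP hQ) :
    ∀ p ∈ P, Metric.infDist p (convexHull ℝ (Q : Set (EuclideanSpace ℝ (Fin 2)))) ≤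
      ε * fdiam P hP := by
  intro p hp
  set C : Set (EuclideanSpace ℝ (Fin 2)) := convexHull ℝ (Q : Set (EuclideanSpace ℝ (Fin 2)))
    with hCdef
  have hCconv : Convex ℝ C := convex_convexHull ℝ _
  have hCne : C.Nonempty := hQ.to_set.convexHull
  have hCcomp : IsCompact C := Q.finite_toSet.isCompact_convexHull (𝕜 := ℝ)
  obtain ⟨q, hqC, hdq⟩ := hCcomp.exists_infDist_eq_dist hCne p
  rw [hdq]
  have hfd0 : 0 ≤ fdiam P hP := by
    have : dist p p ≤ fdiam P hP := by
      unfold fdiam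
      exact Finset.le_sup' (b := (p, p)) (fun pq => dist pq.1 pq.2)
        (Finset.mem_product.2 ⟨hp, hp⟩)
    simpa using this
  rcases eq_or_lt_of_le (dist_nonneg : (0:ℝ) ≤ dist p q) with h0 | h0
  · rw [← h0]; exact mul_nonneg hε0 hfd0
  set d : ℝ := dist p q with hd
  -- projection characterization
  have hproj : ∀ w ∈ C, ⟪p - q, w - q⟫ ≤ 0 := by
    have hinf : ‖p - q‖ = ⨅ w : C, ‖p - (w : EuclideanSpace ℝ (Fin 2))‖ := by
      rw [← dist_eq_norm, ← hd, ← hdq, Metric.infDist_eq_iInf]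
      exact iInf_congr fun w => (dist_eq_norm p w)
    exact (norm_eq_iInf_iff_real_inner_le_zero hCconv hqC).1 hinf
  set u : EuclideanSpace ℝ (Fin 2) := (d⁻¹ : ℝ) • (p - q) with hu
  have hdne : d ≠ 0 := ne_of_gt h0
  have hnormu : ‖u‖ = 1 := by
    rw [hu, norm_smul, norm_inv, Real.norm_eq_abs, abs_of_pos h0, ← dist_eq_norm, ← hd]
    field_simp
  -- for all q' in Q, ⟪u, q'⟫ ≤ ⟪u, q⟫
  have hQle : ∀ q' ∈ Q, ⟪u, q'⟫ ≤ ⟪u, q⟫ := by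
    intro q' hq'
    have h1 : ⟪p - q, q' - q⟫ ≤ 0 := hproj q' (subset_convexHull ℝ _ hq')
    have h2 : ⟪p - q, q'⟫ ≤ ⟪p - q, q⟫ := by
      have := inner_sub_right (𝕜 := ℝ) (p - q) q' q
      linarith [h1, this.symm ▸ h1]
    rw [hu, real_inner_smul_left, real_inner_smul_left]
    exact mul_le_mul_of_nonneg_left h2 (inv_nonneg.2 h0.le)
  -- ⟪u, p⟫ - ⟪u, q⟫ = d
  have hup : ⟪u, p⟫ - ⟪u, q⟫ = d := by
    have : ⟪u, p⟫ - ⟪u, q⟫ = ⟪u, p - q⟫ := by rw [inner_sub_right]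
    rw [this, hu, real_inner_smul_left, real_inner_self_eq_norm_sq, ← dist_eq_norm, ← hd]
    field_simp
  -- width inequality: dirWidth Q ≤ dirWidth P - d
  have hsupQ : Q.sup' hQ (fun x => ⟪u, x⟫) ≤ P.sup' hP (fun x => ⟪u, x⟫) - d := by
    apply Finset.sup'_le
    intro b hb
    have h1 : ⟪u, b⟫ ≤ ⟪u, q⟫ := hQle b hb
    have h2 : ⟪u, p⟫ ≤ P.sup' hP (fun x => ⟪u, x⟫) := Finset.le_sup' _ hp
    linarith
  have hinfQ : P.inf' hP (fun x => ⟪u, x⟫) ≤ Q.inf' hQ (fun x => ⟪u, x⟫) := by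
    apply Finset.le_inf'
    intro b hb
    exact Finset.inf'_le _ (hQP hb)
  have hwidth : dirWidth Q hQ u ≤ dirWidth P hP u - d := by
    unfold dirWidth
    linarith
  have hker' := hker u hnormu
  have hdw : d ≤ ε * dirWidth P hP u := by
    have := hker'
    unfold dirWidth at this hwidth ⊢
    nlinarith [this, hwidth]
  -- dirWidth P ≤ fdiam P
  have hwd : dirWidth P hP u ≤ fdiam P hP := by
    obtain ⟨p1, hp1, hsup⟩ := Finset.exists_mem_eq_sup' hP (fun x => ⟪u, x⟫)
    obtain ⟨p2, hp2, hinf⟩ := Finset.exists_mem_eq_inf' hP (fun x => ⟪u, x⟫)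
    have h1 : ⟪u, p1⟫ - ⟪u, p2⟫ = ⟪u, p1 - p2⟫ := (inner_sub_right u p1 p2).symm
    have h2 : ⟪u, p1 - p2⟫ ≤ ‖u‖ * ‖p1 - p2‖ := real_inner_le_norm u (p1 - p2)
    have h3 : dist p1 p2 ≤ fdiam P hP := by
      unfold fdiam
      exact Finset.le_sup' (b := (p1, p2)) (fun pq => dist pq.1 pq.2)
        (Finset.mem_product.2 ⟨hp1, hp2⟩)
    unfold dirWidth
    rw [hsup, hinf]
    rw [hnormu, one_mul] at h2
    rw [← dist_eq_norm] at h2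
    linarith
  calc d ≤ ε * dirWidth P hP u := hdw
    _ ≤ ε * fdiam P hP := mul_le_mul_of_nonneg_left hwd hε0
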